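/- For n ≥ 2, the vector (A_{n,0}(x), ..., A_{n,n-1}(x))^T equals M·(A_{n-1,0}(x), ..., A_{n-1,n-2}(x))^T, where M is the n×(n-1) matrix with M_{i,j} = x if j < i and M_{i,j} = 1 if j ≥ i (indices 0-based). -/

import Mathlib

open Polynomial
open Equiv

noncomputable section

/-- Number of descents of a permutation of `Fin n` (viewed as the word `σ 0, σ 1, …, σ (n-1)`). -/
def descents {n : ℕ} (σ : Equiv.Perm (Fin n)) : ℕ :=
  (Finset.univ.filter fun i : Fin n =>
    ∃ h : (i : ℕ) + 1 < n, σ ⟨(i : ℕ) + 1, h⟩ < σ i).card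

/-- The Eulerian polynomial `A_n(x) = ∑_{σ ∈ S_n} x^{des σ}`. -/
def eulerianPoly (n : ℕ) : Polynomial ℝ :=
  ∑ σ : Equiv.Perm (Fin n), X ^ descents σ

/-- The refined Eulerian polynomial `A_{n,i}(x)`: the descent generating polynomial over
permutations of `[n]` whose last entry is `n - i` (0-based: `σ (n-1) = n - 1 - i`). -/
def refinedEulerianPoly (n i : ℕ) : Polynomial ℝ :=
  ∑ σ ∈ Finset.univ.filter (fun σ : Equiv.Perm (Fin n) =>
      ∃ h : 0 < n, (σ ⟨n - 1, Nat.sub_lt h Nat.one_pos⟩ : ℕ) = n - 1 - i),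
    X ^ descents σ

lemma descents_eq (m : ℕ) (σ : Equiv.Perm (Fin (m+1))) :
    descents σ = ∑ i : Fin m, if σ i.succ < σ i.castSucc then 1 else 0 := by
  unfold descents
  rw [Finset.card_filter]
  rw [Fin.sum_univ_castSucc (n := m)]
  have hlast : (if ∃ h : (Fin.last m : ℕ) + 1 < m + 1,
      σ ⟨(Fin.last m : ℕ) + 1, h⟩ < σ (Fin.last m) then 1 else 0) = 0 := by
    simp
  rw [hlast, add_zero]
  apply Finset.sum_congr rfl
  intro i _
  congr 1
  have h : ((i.castSucc : Fin (m+1)) : ℕ) + 1 < m + 1 := by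
    simp
  simp only [eq_iff_iff]
  constructor
  · rintro ⟨h', hlt⟩
    convert hlt using 2
    exact Fin.ext (by simp)
  · intro hlt
    exact ⟨h, by convert hlt using 2; exact Fin.ext (by simp)⟩

def build {k : ℕ} (v : Fin (k+2)) (τ : Equiv.Perm (Fin (k+1))) : Equiv.Perm (Fin (k+2)) :=
  ((finSuccEquiv' (Fin.last (k+1))).trans τ.optionCongr).trans (finSuccEquiv' v).symm

lemma build_last {k : ℕ} (v : Fin (k+2)) (τ : Equiv.Perm (Fin (k+1))) :
    build v τ (Fin.last (k+1)) = v := by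
  simp [build, finSuccEquiv'_at, finSuccEquiv'_symm_none]

lemma build_castSucc {k : ℕ} (v : Fin (k+2)) (τ : Equiv.Perm (Fin (k+1))) (j : Fin (k+1)) :
    build v τ j.castSucc = v.succAbove (τ j) := by
  have : (Fin.last (k+1)).succAbove j = j.castSucc := by rw [Fin.succAbove_last]
  rw [build]
  simp only [Equiv.trans_apply, ← this, finSuccEquiv'_succAbove, Equiv.optionCongr_apply,
    Option.map_some, finSuccEquiv'_symm_some]

lemma descents_build {k : ℕ} (v : Fin (k+2)) (τ : Equiv.Perm (Fin (k+1))) :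
    descents (build v τ) = descents τ +
      (if v ≤ (τ (Fin.last k)).castSucc then 1 else 0) := by
  rw [descents_eq (k+1), descents_eq k]
  rw [Fin.sum_univ_castSucc (n := k)]
  congr 1
  · apply Finset.sum_congr rfl
    intro j _
    have h1 : ((j.castSucc : Fin (k+1)).succ : Fin (k+2)) = (j.succ).castSucc := by
      exact Fin.ext rfl
    have h2 : ((j.castSucc : Fin (k+1)).castSucc : Fin (k+2)) = (j.castSucc).castSucc := rfl
    rw [h1, h2, build_castSucc, build_castSucc]
    simp only [Fin.succAbove_lt_succAbove_iff]
  · have h1 : ((Fin.last k : Fin (k+1)).succ : Fin (k+2)) = Fin.last (k+1) := Fin.succ_last k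
    rw [h1, build_last, build_castSucc]
    congr 1
    rw [eq_iff_iff, Fin.lt_succAbove_iff_le_castSucc]

lemma build_injective {k : ℕ} (v : Fin (k+2)) : Function.Injective (build v) := by
  intro τ1 τ2 h
  ext j
  have h1 := build_castSucc v τ1 j
  have h2 := build_castSucc v τ2 j
  rw [h] at h1
  have := h1.symm.trans h2
  exact congrArg Fin.val (v.succAbove_right_injective this)

lemma build_surj {k : ℕ} (v : Fin (k+2)) (σ : Equiv.Perm (Fin (k+2)))
    (hσ : σ (Fin.last (k+1)) = v) : ∃ τ, build v τ = σ := by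
  set ρ := ((finSuccEquiv' (Fin.last (k+1))).symm.trans (σ.trans (finSuccEquiv' v)))
  refine ⟨Equiv.removeNone ρ, ?_⟩
  ext x
  refine Fin.lastCases ?_ ?_ x
  · rw [build_last, hσ]
  · intro j
    rw [build_castSucc]
    have hne : σ j.castSucc ≠ v := by
      rw [← hσ]
      intro hc
      exact absurd (σ.injective hc) (Fin.castSucc_lt_last j).ne
    have hρ : ρ (some j) = finSuccEquiv' v (σ j.castSucc) := by
      simp only [ρ, Equiv.trans_apply]
      congr 1
      rw [show (some j : Option (Fin (k+1))) = finSuccEquiv' (Fin.last (k+1)) j.castSucc from ?_,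
        Equiv.symm_apply_apply]
      rw [← Fin.succAbove_last, finSuccEquiv'_succAbove]
    have hex : ∃ w, ρ (some j) = some w := by
      rw [hρ]
      rcases Option.eq_none_or_eq_some (finSuccEquiv' v (σ j.castSucc)) with h | ⟨w, hw⟩
      · exfalso
        apply hne
        have := (finSuccEquiv'_at v)
        exact (finSuccEquiv' v).injective (h.trans this.symm)
      · exact ⟨w, hw⟩
    have hsome := Equiv.removeNone_some ρ hex
    rw [hρ] at hsome
    have : (finSuccEquiv' v).symm (some (Equiv.removeNone ρ j))
        = (finSuccEquiv' v).symm (finSuccEquiv' v (σ j.castSucc)) := by rw [hsome]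
    rw [finSuccEquiv'_symm_some, Equiv.symm_apply_apply] at this
    exact congrArg Fin.val this

lemma sum_fiber (k : ℕ) (v : Fin (k+2)) :
    ∑ σ ∈ Finset.univ.filter (fun σ : Equiv.Perm (Fin (k+2)) => σ (Fin.last (k+1)) = v),
      (X : Polynomial ℝ) ^ descents σ
    = ∑ τ : Equiv.Perm (Fin (k+1)),
        (X : Polynomial ℝ) ^ descents τ * (if v ≤ (τ (Fin.last k)).castSucc then X else 1) := by
  refine (Finset.sum_bij (fun τ _ => build v τ) ?_ ?_ ?_ ?_).symm
  · intro τ _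
    simp [build_last]
  · intro τ1 _ τ2 _ h
    exact build_injective v h
  · intro σ hσ
    simp only [Finset.mem_filter, Finset.mem_univ, true_and] at hσ
    obtain ⟨τ, hτ⟩ := build_surj v σ hσ
    exact ⟨τ, Finset.mem_univ τ, hτ⟩
  · intro τ _
    rw [descents_build]
    by_cases h : v ≤ (τ (Fin.last k)).castSucc
    · rw [if_pos h, if_pos h, pow_succ]
    · rw [if_neg h, if_neg h, add_zero, mul_one]

theorem refinedEulerian_matrix_recurrence (n : ℕ) (hn : 2 ≤ n) :
    (Matrix.of fun (i : Fin n) (j : Fin (n - 1)) =>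
        if (j : ℕ) < (i : ℕ) then (X : Polynomial ℝ) else 1).mulVec
      (fun j : Fin (n - 1) => refinedEulerianPoly (n - 1) (j : ℕ)) =
    fun i : Fin n => refinedEulerianPoly n (i : ℕ) := by
  obtain ⟨k, rfl⟩ : ∃ k, n = k + 2 := ⟨n - 2, by omega⟩
  funext i
  show ∑ j : Fin (k + 1),
      (if (j : ℕ) < (i : ℕ) then (X : Polynomial ℝ) else 1) * refinedEulerianPoly (k + 1) (j : ℕ)
    = refinedEulerianPoly (k + 2) (i : ℕ)
  set v : Fin (k + 2) := ⟨k + 1 - (i : ℕ), by omega⟩ with hv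
  -- rewrite RHS
  have hRHS : refinedEulerianPoly (k + 2) (i : ℕ)
      = ∑ σ ∈ Finset.univ.filter (fun σ : Equiv.Perm (Fin (k+2)) => σ (Fin.last (k+1)) = v),
          (X : Polynomial ℝ) ^ descents σ := by
    unfold refinedEulerianPoly
    apply Finset.sum_congr _ (fun _ _ => rfl)
    ext σ
    simp only [Finset.mem_filter, Finset.mem_univ, true_and]
    constructor
    · rintro ⟨h, hval⟩
      exact Fin.ext hval
    · intro h
      exact ⟨by omega, congrArg Fin.val h⟩
  rw [hRHS, sum_fiber k v]
  -- rewrite LHS via fiberwise decomposition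
  set g : Equiv.Perm (Fin (k+1)) → Fin (k+1) :=
    fun τ => ⟨k - (τ (Fin.last k) : ℕ), by omega⟩ with hg
  have hfib : ∀ j : Fin (k+1), refinedEulerianPoly (k + 1) (j : ℕ)
      = ∑ τ ∈ Finset.univ.filter (fun τ => g τ = j), (X : Polynomial ℝ) ^ descents τ := by
    intro j
    unfold refinedEulerianPoly
    apply Finset.sum_congr _ (fun _ _ => rfl)
    ext τ
    simp only [Finset.mem_filter, Finset.mem_univ, true_and]
    have hτ : (τ (Fin.last k) : ℕ) ≤ k := by
      have := (τ (Fin.last k)).isLt; omega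
    have hj : (j : ℕ) ≤ k := by have := j.isLt; omega
    constructor
    · rintro ⟨h, hval⟩
      have hval' : (τ (Fin.last k) : ℕ) = k - (j : ℕ) := hval
      refine Fin.ext ?_
      show k - (τ (Fin.last k) : ℕ) = (j : ℕ)
      omega
    · intro h
      refine ⟨by omega, ?_⟩
      have h' : k - (τ (Fin.last k) : ℕ) = (j : ℕ) := congrArg Fin.val h
      show (τ (Fin.last k) : ℕ) = k - (j : ℕ)
      omega
  calc ∑ j : Fin (k + 1),
      (if (j : ℕ) < (i : ℕ) then (X : Polynomial ℝ) else 1) * refinedEulerianPoly (k + 1) (j : ℕ)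
      = ∑ j : Fin (k+1), ∑ τ ∈ Finset.univ.filter (fun τ => g τ = j),
          (X : Polynomial ℝ) ^ descents τ * (if (g τ : ℕ) < (i : ℕ) then X else 1) := by
        apply Finset.sum_congr rfl
        intro j _
        rw [hfib j, Finset.mul_sum]
        apply Finset.sum_congr rfl
        intro τ hτ
        simp only [Finset.mem_filter] at hτ
        rw [hτ.2, mul_comm]
    _ = ∑ τ : Equiv.Perm (Fin (k+1)),
          (X : Polynomial ℝ) ^ descents τ * (if (g τ : ℕ) < (i : ℕ) then X else 1) := by
        rw [Finset.sum_fiberwise_eq_sum_filter]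
        simp
    _ = ∑ τ : Equiv.Perm (Fin (k+1)),
          (X : Polynomial ℝ) ^ descents τ * (if v ≤ (τ (Fin.last k)).castSucc then X else 1) := by
        apply Finset.sum_congr rfl
        intro τ _
        congr 1
        have hτ : (τ (Fin.last k) : ℕ) ≤ k := by
          have := (τ (Fin.last k)).isLt; omega
        have hcond : ((g τ : ℕ) < (i : ℕ)) ↔ (v ≤ (τ (Fin.last k)).castSucc) := by
          simp only [hg, hv, Fin.le_def, Fin.coe_castSucc]
          constructor <;> (intro; omega)
        rw [if_congr hcond rfl rfl]

end
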